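/- For pairwise distinct primes p₁, …, p_n, the field extension ℚ(√p₁, …, √p_n)/ℚ has degree 2^n; equivalently, the 2^n products of subsets of {√p₁,…,√p_n} are linearly independent over ℚ. -/

import Mathlib

open Polynomial IntermediateField

lemma quad_mem {F K : Type*} [Field F] [Field K] [Algebra F K] (α : K) (b : F)
    (hα : α ^ 2 = algebraMap F K b) (x : K) (hx : x ∈ F⟮α⟯) :
    ∃ c d : F, x = algebraMap F K c + algebraMap F K d * α := by
  have hint : IsIntegral F α := by
    refine ⟨X ^ 2 - C b, monic_X_pow_sub_C b two_ne_zero, ?_⟩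
    simp [hα]
  have hx' : x ∈ Algebra.adjoin F {α} := by
    rwa [← IntermediateField.adjoin_simple_toSubalgebra_of_isAlgebraic hint.isAlgebraic]
  rw [Algebra.adjoin_singleton_eq_range_aeval] at hx'
  obtain ⟨q, rfl⟩ := hx'
  have hm : Monic (X ^ 2 - C b) := monic_X_pow_sub_C b two_ne_zero
  have hdiv := Polynomial.modByMonic_add_div q (X ^ 2 - C b)
  set r := q %ₘ (X ^ 2 - C b) with hr
  have hdeg : r.degree ≤ 1 := by
    have := Polynomial.degree_modByMonic_lt q hm
    rw [Polynomial.degree_X_pow_sub_C (by norm_num : 0 < 2)] at this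
    exact Order.le_of_lt_succ (by exact_mod_cast this)
  refine ⟨r.coeff 0, r.coeff 1, ?_⟩
  have : (aeval α) q = (aeval α) r := by
    conv_lhs => rw [← hdiv]
    simp [hα, sub_mul]
  rw [show (aeval α).toRingHom q = (aeval α) q from rfl, this]
  conv_lhs => rw [Polynomial.eq_X_add_C_of_degree_le_one hdeg]
  rw [map_add, map_mul, aeval_C, aeval_C, aeval_X]
  ring

lemma sqrt_not_mem_adjoin (L : IntermediateField ℚ ℝ) {a b : ℝ}
    (ha : 0 ≤ a) (hb : 0 ≤ b) (haL : a ∈ L) (hbL : b ∈ L)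
    (h1 : Real.sqrt a ∉ L) (h2 : Real.sqrt b ∉ L) (h3 : Real.sqrt (a * b) ∉ L) :
    Real.sqrt a ∉ (IntermediateField.adjoin L {Real.sqrt b}) := by
  intro hmem
  have hα : (Real.sqrt b) ^ 2 = algebraMap L ℝ ⟨b, hbL⟩ := by
    simpa using Real.sq_sqrt hb
  obtain ⟨c, d, hcd⟩ := quad_mem (Real.sqrt b) ⟨b, hbL⟩ hα _ hmem
  simp only [IntermediateField.algebraMap_apply] at hcd
  have hsb : Real.sqrt b * Real.sqrt b = b := Real.mul_self_sqrt hb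
  have hsa : Real.sqrt a * Real.sqrt a = a := Real.mul_self_sqrt ha
  by_cases hd : (d : ℝ) = 0
  · rw [hd] at hcd
    simp at hcd
    exact h1 (hcd ▸ c.2)
  by_cases hc : (c : ℝ) = 0
  · rw [hc] at hcd
    simp at hcd
    have : Real.sqrt (a * b) = (d : ℝ) * b := by
      rw [Real.sqrt_mul ha, hcd]
      rw [mul_assoc, hsb]
    exact h3 (this ▸ mul_mem d.2 hbL)
  · have key : Real.sqrt b = (a - (c:ℝ)^2 - (d:ℝ)^2 * b) / (2 * c * d) := by
      have h4 : (2 * (c:ℝ) * d) * Real.sqrt b = a - (c:ℝ)^2 - (d:ℝ)^2 * b := by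
        have h5 := hsa
        rw [hcd] at h5
        linear_combination h5 - (d:ℝ)^2 * hsb
      field_simp
      linear_combination h4
    have : Real.sqrt b ∈ L := by
      rw [key]
      have h2L : ((2:ℝ)) ∈ L := by
        rw [show (2:ℝ) = 1 + 1 by norm_num]
        exact add_mem (one_mem L) (one_mem L)
      exact div_mem (sub_mem (sub_mem haL (pow_mem c.2 2)) (mul_mem (pow_mem d.2 2) hbL))
        (mul_mem (mul_mem h2L c.2) d.2)
    exact h2 this

lemma key_lemma : ∀ (n : ℕ) (p : Fin n → ℕ), (∀ i, (p i).Prime) → Function.Injective p →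
    ∀ m : ℕ, Squarefree m → 1 < m → (∀ i, ¬ (p i ∣ m)) →
    Real.sqrt m ∉ IntermediateField.adjoin ℚ (Set.range fun i => Real.sqrt (p i)) := by
  intro n
  induction n with
  | zero =>
    intro p hp hinj m hsq hm hdvd hmem
    have hrange : (Set.range fun i : Fin 0 => Real.sqrt (p i)) = ∅ := by
      simp [Set.range_eq_empty]
    rw [hrange, IntermediateField.adjoin_empty] at hmem
    rw [IntermediateField.mem_bot] at hmem
    obtain ⟨q, hq⟩ := hmem
    have : Irrational (Real.sqrt m) := by
      rw [irrational_sqrt_natCast_iff]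
      rintro ⟨k, hk⟩
      have hk1 : k = 1 := Nat.isUnit_iff.mp (hsq k (by rw [hk]))
      rw [hk1] at hk
      omega
    exact this ⟨q, hq⟩
  | succ n ih =>
    intro p hp hinj m hsq hm hdvd hmem
    set pl := p (Fin.last n) with hpl
    set S : Set ℝ := Set.range (fun i : Fin n => Real.sqrt (p i.castSucc)) with hS
    set E := IntermediateField.adjoin ℚ S with hE
    have hrange : (Set.range fun i : Fin (n + 1) => Real.sqrt (p i)) =
        S ∪ {Real.sqrt pl} := by
      ext x
      constructor
      · rintro ⟨i, rfl⟩
        refine Fin.lastCases ?_ ?_ i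
        · exact Or.inr rfl
        · intro j; exact Or.inl ⟨j, rfl⟩
      · rintro (⟨j, rfl⟩ | rfl)
        · exact ⟨j.castSucc, rfl⟩
        · exact ⟨Fin.last n, rfl⟩
    rw [hrange, ← IntermediateField.adjoin_adjoin_left ℚ S {Real.sqrt pl}] at hmem
    have hmem' : Real.sqrt m ∈ IntermediateField.adjoin E {Real.sqrt pl} := hmem
    have hinj' : Function.Injective (fun i : Fin n => p i.castSucc) :=
      hinj.comp (Fin.castSucc_injective n)
    have hp' : ∀ i : Fin n, (p i.castSucc).Prime := fun i => hp _
    have hplm : ¬ (pl ∣ m) := hdvd (Fin.last n)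
    have hcop : Nat.Coprime pl m := ((hp (Fin.last n)).coprime_iff_not_dvd).mpr hplm
    have haL : ((m : ℝ)) ∈ E := by
      have := IntermediateField.algebraMap_mem E ((m : ℚ))
      simpa using this
    have hbL : ((pl : ℝ)) ∈ E := by
      have := IntermediateField.algebraMap_mem E ((pl : ℚ))
      simpa using this
    have h1 : Real.sqrt m ∉ E :=
      ih _ hp' hinj' m hsq hm (fun i => hdvd i.castSucc)
    have h2 : Real.sqrt pl ∉ E := by
      refine ih _ hp' hinj' pl (hp (Fin.last n)).squarefree (hp (Fin.last n)).one_lt ?_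
      intro i hdv
      have : p i.castSucc = pl := ((Nat.prime_dvd_prime_iff_eq (hp' i) (hp (Fin.last n))).mp hdv)
      exact absurd (hinj this) (Fin.castSucc_lt_last i).ne
    have h3 : Real.sqrt ((m : ℝ) * (pl : ℝ)) ∉ E := by
      rw [show ((m : ℝ) * (pl : ℝ)) = ((m * pl : ℕ) : ℝ) by push_cast; ring]
      refine ih _ hp' hinj' (m * pl) ?_ ?_ ?_
      · exact (Nat.squarefree_mul hcop.symm).mpr ⟨hsq, (hp (Fin.last n)).squarefree⟩
      · have := (hp (Fin.last n)).one_lt; exact one_lt_mul_of_lt_of_le hm (by omega)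
      · intro i hdv
        rcases (hp' i).dvd_mul.mp hdv with h | h
        · exact hdvd i.castSucc h
        · have : p i.castSucc = pl := (Nat.prime_dvd_prime_iff_eq (hp' i) (hp (Fin.last n))).mp h
          exact absurd (hinj this) (Fin.castSucc_lt_last i).ne
    exact sqrt_not_mem_adjoin E (by positivity) (by positivity) haL hbL h1 h2 h3 hmem'

set_option synthInstance.maxHeartbeats 1000000 in
set_option maxHeartbeats 1000000 in
/-- For pairwise distinct primes `p₁, …, p_n`, the extension `ℚ(√p₁, …, √p_n)/ℚ`
has degree `2 ^ n`. -/
theorem multiquadratic_degree (n : ℕ) (p : Fin n → ℕ)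
    (hp : ∀ i, Nat.Prime (p i)) (hinj : Function.Injective p) :
    Module.finrank ℚ
      (IntermediateField.adjoin ℚ (Set.range fun i => Real.sqrt (p i))) = 2 ^ n := by
  induction n with
  | zero =>
    rw [show (Set.range fun i : Fin 0 => Real.sqrt (p i)) = ∅ by simp,
      IntermediateField.adjoin_empty]
    simpa using IntermediateField.finrank_bot (F := ℚ) (E := ℝ)
  | succ n ih =>
    set pl := p (Fin.last n) with hpl
    set S : Set ℝ := Set.range (fun i : Fin n => Real.sqrt (p i.castSucc)) with hS
    set E := IntermediateField.adjoin ℚ S with hE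
    set x := Real.sqrt pl with hx
    have hrange : (Set.range fun i : Fin (n + 1) => Real.sqrt (p i)) = S ∪ {x} := by
      ext y
      constructor
      · rintro ⟨i, rfl⟩
        refine Fin.lastCases ?_ ?_ i
        · exact Or.inr rfl
        · intro j; exact Or.inl ⟨j, rfl⟩
      · rintro (⟨j, rfl⟩ | rfl)
        · exact ⟨j.castSucc, rfl⟩
        · exact ⟨Fin.last n, rfl⟩
    have hp' : ∀ i : Fin n, (p i.castSucc).Prime := fun i => hp _
    have hinj' : Function.Injective (fun i : Fin n => p i.castSucc) :=
      hinj.comp (Fin.castSucc_injective n)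
    have hxE : x ∉ E := by
      refine key_lemma n _ hp' hinj' pl (hp (Fin.last n)).squarefree (hp (Fin.last n)).one_lt ?_
      intro i hdv
      have : p i.castSucc = pl := (Nat.prime_dvd_prime_iff_eq (hp' i) (hp (Fin.last n))).mp hdv
      exact absurd (hinj this) (Fin.castSucc_lt_last i).ne
    have hplE : ((pl : ℝ)) ∈ E := by
      have := IntermediateField.algebraMap_mem E ((pl : ℚ))
      simpa using this
    have hα : x ^ 2 = algebraMap E ℝ ⟨(pl : ℝ), hplE⟩ := by
      rw [IntermediateField.algebraMap_apply]
      exact Real.sq_sqrt (by positivity)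
    have hint : IsIntegral E x := by
      refine ⟨Polynomial.X ^ 2 - Polynomial.C ⟨(pl : ℝ), hplE⟩,
        Polynomial.monic_X_pow_sub_C _ two_ne_zero, ?_⟩
      simp [hα]
    have hdeg2 : (minpoly E x).natDegree = 2 := by
      have hle : (minpoly E x).natDegree ≤ 2 := by
        have hdvd := minpoly.dvd E x (p := Polynomial.X ^ 2 - Polynomial.C ⟨(pl : ℝ), hplE⟩)
          (by simp [hα])
        have hne : (Polynomial.X ^ 2 - Polynomial.C (⟨(pl : ℝ), hplE⟩ : E)) ≠ 0 :=
          (Polynomial.monic_X_pow_sub_C _ two_ne_zero).ne_zero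
        simpa [Polynomial.natDegree_X_pow_sub_C] using Polynomial.natDegree_le_of_dvd hdvd hne
      have hge : 2 ≤ (minpoly E x).natDegree := by
        rw [minpoly.two_le_natDegree_iff hint]
        rintro ⟨y, hy⟩
        exact hxE (hy ▸ y.2)
      omega
    have hfr2 : Module.finrank E (IntermediateField.adjoin E {x}) = 2 := by
      rw [IntermediateField.adjoin.finrank hint, hdeg2]
    have htower := Module.finrank_mul_finrank ℚ (↥E) ↥(IntermediateField.adjoin E {x})
    rw [hrange, ← IntermediateField.adjoin_adjoin_left ℚ S {x}]
    have hih : Module.finrank ℚ ↥E = 2 ^ n := ih _ hp' hinj'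
    calc Module.finrank ℚ ↥((IntermediateField.adjoin E {x}).restrictScalars ℚ)
        = Module.finrank ℚ ↥(IntermediateField.adjoin E {x}) := rfl
      _ = 2 ^ (n + 1) := by rw [← htower, hih, hfr2]; ring
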